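/- The level construction yields n-level trees: let n be a natural number, let A₀, …, A_n be finite types with A₀ a singleton, and let f_i : A_i → A_{i−1} be maps for 1 ≤ i ≤ n. Set A = Σ_{i=0}^{n} A_i, M = Σ_{i=1}^{n} A_i, N = Σ_{i=0}^{n−1} A_i, let s : M → A and t : N → A be the evident inclusions, and let p : M → N send (i, a) to (i−1, f_i a). Then (A, M, N, s, p, t) satisfies the three tree axioms; moreover, for each edge (i, a), the least k with σ^[k](i,a) equal to the root is i (so all edges have height ≤ n), and the leaves (the edges not in the image of t) are exactly the elements of A_n: the tree is an n-level tree. -/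

import Mathlib

open scoped Classical

/-- The level construction yields `n`-level trees: given finite types
`A₀, …, A_n` with `A₀` a singleton and maps `f_i : A_i → A_{i-1}`, the evident
data on `A = Σᵢ Aᵢ`, `M = Σ_{i=1}^n Aᵢ`, `N = Σ_{i=0}^{n-1} Aᵢ` satisfies the
three tree axioms; moreover the height of an edge `(i, a)` is exactly `i` (so all
edges have height `≤ n`), and the leaves are exactly the elements of `A_n`. -/
theorem level_construction_is_n_level_tree
    (n : ℕ) (A : Fin (n + 1) → Type) [∀ i, Finite (A i)] [Unique (A 0)]
    (f : (i : Fin n) → A i.succ → A i.castSucc) :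
    let E : Type := (i : Fin (n + 1)) × A i
    let M : Type := (i : Fin n) × A i.succ
    let N : Type := (i : Fin n) × A i.castSucc
    let root : E := ⟨0, default⟩
    let s : M → E := fun m => ⟨m.1.succ, m.2⟩
    let t : N → E := fun m => ⟨m.1.castSucc, m.2⟩
    let p : M → N := fun m => ⟨m.1, f m.1 m.2⟩
    let σ : E → E := fun a => if h : ∃ e, s e = a then t (p h.choose) else a
    -- axiom (1): `t` is injective
    Function.Injective t ∧
    -- axiom (2): `s` is injective with singleton complement the root
    Function.Injective s ∧ root ∉ Set.range s ∧
      (∀ a : E, a ≠ root → a ∈ Set.range s) ∧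
    -- `σ` is the walk-to-the-root function
    σ root = root ∧ (∀ e : M, σ (s e) = t (p e)) ∧
    -- axiom (3), with the height of the edge `(i, x)` exactly `i ≤ n`
    (∀ a : E, σ^[(a.1 : ℕ)] a = root ∧
      ∀ k : ℕ, σ^[k] a = root → (a.1 : ℕ) ≤ k) ∧
    -- the leaves are exactly the elements of `A_n`
    (∀ a : E, a ∉ Set.range t ↔ (a.1 : ℕ) = n) := by
  intro E M N root s t p σ
  have hs : Function.Injective s := by
    rintro ⟨i, x⟩ ⟨j, y⟩ h
    obtain ⟨h1, h2⟩ := Sigma.mk.inj_iff.mp h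
    have hij : i = j := Fin.succ_injective _ h1
    subst hij
    exact congrArg _ (eq_of_heq h2)
  have ht : Function.Injective t := by
    rintro ⟨i, x⟩ ⟨j, y⟩ h
    obtain ⟨h1, h2⟩ := Sigma.mk.inj_iff.mp h
    have hij : i = j := Fin.castSucc_injective _ h1
    subst hij
    exact congrArg _ (eq_of_heq h2)
  have hroot : root ∉ Set.range s := by
    rintro ⟨m, hm⟩
    have := congrArg Sigma.fst hm
    exact Fin.succ_ne_zero m.1 this
  have hσroot : σ root = root := by
    have : ¬ ∃ e, s e = root := fun ⟨m, hm⟩ => hroot ⟨m, hm⟩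
    simp only [σ, dif_neg this]
  have hσs : ∀ e : M, σ (s e) = t (p e) := by
    intro e
    have hex : ∃ m, s m = s e := ⟨e, rfl⟩
    simp only [σ, dif_pos hex]
    rw [hs hex.choose_spec]
  have hstep : ∀ (j : Fin n) (x : A j.succ),
      σ ⟨j.succ, x⟩ = ⟨j.castSucc, f j x⟩ := fun j x => hσs ⟨j, x⟩
  have hfwd : ∀ (k : ℕ) (a : E), (a.1 : ℕ) = k → σ^[k] a = root := by
    intro k
    induction k with
    | zero =>
      rintro ⟨i, x⟩ hi
      have h0 : i = 0 := Fin.ext hi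
      subst h0
      simp only [Function.iterate_zero, id]
      exact congrArg _ (Subsingleton.elim x default)
    | succ k ih =>
      rintro ⟨i, x⟩ hi
      induction i using Fin.cases with
      | zero => simp at hi
      | succ j => ?_
      rw [Function.iterate_succ_apply, hstep j x]
      apply ih
      simpa using Nat.succ_injective (by simpa using hi)
  have hmin : ∀ (k : ℕ) (a : E), σ^[k] a = root → (a.1 : ℕ) ≤ k := by
    intro k
    induction k with
    | zero =>
      rintro ⟨i, x⟩ h
      simp only [Function.iterate_zero, id] at h
      simpa [root] using congrArg (fun e : E => ((e.1 : Fin (n+1)) : ℕ)) h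
    | succ k ih =>
      rintro ⟨i, x⟩ h
      induction i using Fin.cases with
      | zero => simp
      | succ j =>
        rw [Function.iterate_succ_apply, hstep j x] at h
        have := ih _ h
        simp only [Fin.coe_castSucc] at this
        simpa using Nat.succ_le_succ this
  refine ⟨ht, hs, hroot, ?_, hσroot, hσs, fun a => ⟨hfwd _ a rfl, fun k => hmin k a⟩, ?_⟩
  · rintro ⟨i, x⟩ hne
    rcases eq_or_ne i 0 with h0 | h0
    · subst h0
      exact absurd (congrArg (fun y => (⟨0, y⟩ : E)) (Subsingleton.elim x default)) hne
    · obtain ⟨j, rfl⟩ := Fin.exists_succ_eq.mpr h0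
      exact ⟨⟨j, x⟩, rfl⟩
  · rintro ⟨i, x⟩
    constructor
    · intro hnr
      by_contra hn
      have hilt : i ≠ Fin.last n := by
        intro h; subst h; simp at hn
      obtain ⟨j, rfl⟩ := Fin.exists_castSucc_eq.mpr hilt
      exact hnr ⟨⟨j, x⟩, rfl⟩
    · rintro hn ⟨⟨j, y⟩, hj⟩
      have hc : ((j.castSucc : Fin (n + 1)) : ℕ) = (i : ℕ) :=
        congrArg (fun e : E => (e.1 : ℕ)) hj
      rw [Fin.coe_castSucc, hn] at hc
      exact absurd hc (Nat.ne_of_lt j.isLt)
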